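/- arXiv:1712.06095 — 7 statements merged into one kernel-verified Lean document; each statement's English description precedes it below -/
import Mathlib

section
/- Suppose β, β̄, σ, σ̄ ∈ K satisfy β² = β̄² = 1 and σ² = σ̄² = 1 and σ^{gcd(n,n−2)} = σ̄^{gcd(n,n−2)} = 1, and suppose f, F ∈ {0,…,m−1} and s, t ∈ {0,…,n−1} satisfy gcd(t,n) = 1, m ∣ 2f, m ∣ nF, m ∣ 2F, q^f = β·β̄·σ̄^s and q^F = σ·σ̄^t. Let τ₁ ∈ {0,…,n−1} be such that t·τ₁ ≡ 1 (mod n), let τ₂ ∈ {0,…,n−1} be such that τ₂ ≡ −τ₁·s (mod n), let f̄ ∈ {0,…,m−1} be such that f̄ ≡ −f − F·τ₂ (mod m), and let F̄ ∈ {0,…,m−1} be such that F̄ ≡ −F·τ₁ (mod m). Then gcd(τ₁,n) = 1, m ∣ 2f̄, m ∣ nF̄, m ∣ 2F̄, q^{f̄} = β̄·β·σ^{τ₂} and q^{F̄} = σ̄·σ^{τ₁}. In particular (β,σ) ~ (β̄,σ̄) implies (β̄,σ̄) ~ (β,σ). -/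
/-- The set of parameter pairs `(β, σ)` with `β² = 1` and `σ^{gcd(n, n-2)} = 1`. -/
def taftSet (K : Type*) [Field K] (n : ℕ) : Set (K × K) :=
  {p | p.1 ^ 2 = 1 ∧ p.2 ^ Nat.gcd n (n - 2) = 1}

/-- `(β, σ) ~ (β', σ')` iff there exist `f, F ∈ {0,…,m-1}` and `s, t ∈ {0,…,n-1}` with
`gcd(t, n) = 1`, `m ∣ 2f`, `m ∣ nF`, `m ∣ 2F`, `q^f = β·β'·σ'^s` and `q^F = σ·σ'^t`. -/
def taftRel {K : Type*} [Field K] (m n : ℕ) (q : K) (p p' : K × K) : Prop :=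
  ∃ f F s t : ℕ, f ≤ m - 1 ∧ F ≤ m - 1 ∧ s ≤ n - 1 ∧ t ≤ n - 1 ∧
    Nat.gcd t n = 1 ∧ m ∣ 2 * f ∧ m ∣ n * F ∧ m ∣ 2 * F ∧
    q ^ f = p.1 * p'.1 * p'.2 ^ s ∧ q ^ F = p.2 * p'.2 ^ t

private lemma zpow_congr' {K : Type*} [Field K] {x : K} (hx : x ≠ 0) {m : ℤ}
    (h1 : x ^ m = 1) {a b : ℤ} (h : a ≡ b [ZMOD m]) : x ^ a = x ^ b := by
  obtain ⟨k, hk⟩ := h.dvd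
  have hb : b = a + m * k := by omega
  rw [hb, zpow_add₀ hx, zpow_mul, h1, one_zpow, mul_one]

/-- Symmetry of `~`: from witnessing data `(f, F, s, t)` for `(β,σ) ~ (β',σ')` one constructs,
via `τ₁, τ₂, f̄, F̄`, witnessing data for `(β',σ') ~ (β,σ)`. -/
theorem taftRel_symm_data {K : Type*} [Field K] (m n : ℕ) (hm : 2 ≤ m) (hn : 3 ≤ n)
    (q : K) (hq : IsPrimitiveRoot q m)
    (β β' σ σ' : K) (hβ : β ^ 2 = 1) (hβ' : β' ^ 2 = 1)
    (hσ2 : σ ^ 2 = 1) (hσ'2 : σ' ^ 2 = 1)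
    (hσ : σ ^ Nat.gcd n (n - 2) = 1) (hσ' : σ' ^ Nat.gcd n (n - 2) = 1)
    (f F s t : ℕ) (hf : f ≤ m - 1) (hF : F ≤ m - 1) (hs : s ≤ n - 1) (ht : t ≤ n - 1)
    (htn : Nat.gcd t n = 1) (h2f : m ∣ 2 * f) (hnF : m ∣ n * F) (h2F : m ∣ 2 * F)
    (hqf : q ^ f = β * β' * σ' ^ s) (hqF : q ^ F = σ * σ' ^ t)
    (τ₁ τ₂ f' F' : ℕ) (hτ₁ : τ₁ ≤ n - 1) (hτ₂ : τ₂ ≤ n - 1)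
    (hf'b : f' ≤ m - 1) (hF'b : F' ≤ m - 1)
    (hτ₁def : ((t : ℤ) * τ₁) ≡ 1 [ZMOD (n : ℤ)])
    (hτ₂def : (τ₂ : ℤ) ≡ -((τ₁ : ℤ) * s) [ZMOD (n : ℤ)])
    (hf'def : (f' : ℤ) ≡ -(f : ℤ) - (F : ℤ) * τ₂ [ZMOD (m : ℤ)])
    (hF'def : (F' : ℤ) ≡ -((F : ℤ) * τ₁) [ZMOD (m : ℤ)]) :
    Nat.gcd τ₁ n = 1 ∧ m ∣ 2 * f' ∧ m ∣ n * F' ∧ m ∣ 2 * F' ∧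
      q ^ f' = β' * β * σ ^ τ₂ ∧ q ^ F' = σ' * σ ^ τ₁ ∧
      taftRel m n q (β', σ') (β, σ) := by
  -- nonvanishing
  have hq0 : q ≠ 0 := fun h => by
    have := hq.pow_eq_one
    rw [h, zero_pow (by omega : m ≠ 0)] at this
    exact zero_ne_one this
  have nz : ∀ x : K, x ^ 2 = 1 → x ≠ 0 := fun x hx h => by
    rw [h, zero_pow (by norm_num : (2:ℕ) ≠ 0)] at hx; exact zero_ne_one hx
  have hβ0 := nz β hβ
  have hβ'0 := nz β' hβ'
  have hσ0 := nz σ hσ2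
  have hσ'0 := nz σ' hσ'2
  -- zpow versions of hypotheses
  have hq1 : q ^ (m : ℤ) = 1 := by rw [zpow_natCast]; exact hq.pow_eq_one
  have hσ2z : σ ^ (2 : ℤ) = 1 := by
    rw [show (2:ℤ) = ((2:ℕ):ℤ) by norm_num, zpow_natCast]; exact hσ2
  have hσ'2z : σ' ^ (2 : ℤ) = 1 := by
    rw [show (2:ℤ) = ((2:ℕ):ℤ) by norm_num, zpow_natCast]; exact hσ'2
  have hσ'n : σ' ^ (n : ℤ) = 1 := by
    obtain ⟨c, hc⟩ := Nat.gcd_dvd_left n (n - 2)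
    rw [zpow_natCast, hc, pow_mul, hσ', one_pow]
  have hqfz : q ^ (f : ℤ) = β * β' * σ' ^ (s : ℤ) := by
    rw [zpow_natCast, zpow_natCast]; exact hqf
  have hqFz : q ^ (F : ℤ) = σ * σ' ^ (t : ℤ) := by
    rw [zpow_natCast, zpow_natCast]; exact hqF
  -- divisibility in ℤ
  have h2fz : (m:ℤ) ∣ 2 * f := by exact_mod_cast h2f
  have hnFz : (m:ℤ) ∣ n * F := by exact_mod_cast hnF
  have h2Fz : (m:ℤ) ∣ 2 * F := by exact_mod_cast h2F
  have hd1 : (m:ℤ) ∣ (f' : ℤ) + f + F * τ₂ := by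
    obtain ⟨k, hk⟩ := hf'def.dvd
    exact ⟨-k, by linarith⟩
  have hd2 : (m:ℤ) ∣ (F' : ℤ) + F * τ₁ := by
    obtain ⟨k, hk⟩ := hF'def.dvd
    exact ⟨-k, by linarith⟩
  -- gcd
  have hgcd : Nat.gcd τ₁ n = 1 := by
    obtain ⟨k, hk⟩ := hτ₁def.dvd
    have : Int.gcd (τ₁:ℤ) (n:ℤ) = 1 :=
      Int.isCoprime_iff_gcd_eq_one.mp ⟨t, k, by linarith⟩
    simpa [Int.gcd_natCast_natCast] using this
  have hdvd1 : m ∣ 2 * f' := by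
    have : (m:ℤ) ∣ 2 * (f' : ℤ) := by
      have e : (2 * (f':ℤ)) = 2 * ((f':ℤ) + f + F * τ₂) - 2 * f - (2 * F) * τ₂ := by ring
      rw [e]
      exact dvd_sub (dvd_sub (Dvd.dvd.mul_left hd1 2) h2fz) (Dvd.dvd.mul_right h2Fz _)
    exact_mod_cast this
  have hdvd2 : m ∣ n * F' := by
    have : (m:ℤ) ∣ (n:ℤ) * F' := by
      have e : ((n:ℤ) * F') = n * ((F':ℤ) + F * τ₁) - (n * F) * τ₁ := by ring
      rw [e]
      exact dvd_sub (Dvd.dvd.mul_left hd2 _) (Dvd.dvd.mul_right hnFz _)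
    exact_mod_cast this
  have hdvd3 : m ∣ 2 * F' := by
    have : (m:ℤ) ∣ 2 * (F' : ℤ) := by
      have e : (2 * (F':ℤ)) = 2 * ((F':ℤ) + F * τ₁) - (2 * F) * τ₁ := by ring
      rw [e]
      exact dvd_sub (Dvd.dvd.mul_left hd2 2) (Dvd.dvd.mul_right h2Fz _)
    exact_mod_cast this
  -- involution facts
  have hσ'inv : σ'⁻¹ = σ' := by
    have : σ' * σ' = 1 := by rw [← sq]; exact hσ'2
    field_simp
    linear_combination -this
  have hβinv : β⁻¹ = β := by
    have : β * β = 1 := by rw [← sq]; exact hβ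
    field_simp; linear_combination -this
  have hβ'inv : β'⁻¹ = β' := by
    have : β' * β' = 1 := by rw [← sq]; exact hβ'
    field_simp; linear_combination -this
  have hσnegτ : ∀ a : ℕ, σ ^ (-(a:ℤ)) = σ ^ (a:ℤ) := fun a =>
    zpow_congr' hσ0 hσ2z (Int.modEq_iff_dvd.mpr ⟨a, by ring⟩)
  have hσ'negs : σ' ^ (-(s:ℤ)) = σ' ^ (s:ℤ) :=
    zpow_congr' hσ'0 hσ'2z (Int.modEq_iff_dvd.mpr ⟨s, by ring⟩)
  -- key equality for F'
  have key6 : q ^ (F' : ℤ) = σ' * σ ^ (τ₁ : ℤ) := by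
    calc q ^ (F':ℤ) = q ^ (-((F:ℤ)*τ₁)) := zpow_congr' hq0 hq1 hF'def
      _ = ((q ^ (F:ℤ)) ^ (τ₁:ℤ))⁻¹ := by rw [zpow_neg, zpow_mul]
      _ = ((σ * σ'^(t:ℤ)) ^ (τ₁:ℤ))⁻¹ := by rw [hqFz]
      _ = (σ ^ (τ₁:ℤ) * σ' ^ ((t:ℤ)*(τ₁:ℤ)))⁻¹ := by rw [mul_zpow, ← zpow_mul]
      _ = (σ ^ (τ₁:ℤ) * σ')⁻¹ := by rw [zpow_congr' hσ'0 hσ'n hτ₁def, zpow_one]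
      _ = (σ ^ (τ₁:ℤ))⁻¹ * σ'⁻¹ := by rw [mul_inv]
      _ = σ ^ (τ₁:ℤ) * σ' := by rw [← zpow_neg, hσnegτ τ₁, hσ'inv]
      _ = σ' * σ ^ (τ₁:ℤ) := mul_comm _ _
  -- key equality for f'
  have hmod : -((t:ℤ) * τ₂) ≡ (s:ℤ) [ZMOD (n:ℤ)] := by
    calc -((t:ℤ) * τ₂) ≡ -((t:ℤ) * (-((τ₁:ℤ) * s))) [ZMOD (n:ℤ)] :=
          (hτ₂def.mul_left (t:ℤ)).neg
      _ = ((t:ℤ) * τ₁) * s := by ring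
      _ ≡ 1 * s [ZMOD (n:ℤ)] := hτ₁def.mul_right _
      _ = (s:ℤ) := one_mul _
  have key5 : q ^ (f' : ℤ) = β' * β * σ ^ (τ₂ : ℤ) := by
    calc q ^ (f':ℤ) = q ^ (-(f:ℤ) - (F:ℤ)*τ₂) := zpow_congr' hq0 hq1 hf'def
      _ = q ^ (-(f:ℤ)) * q ^ (-((F:ℤ)*τ₂)) := by
          rw [← zpow_add₀ hq0]; ring_nf
      _ = (q ^ (f:ℤ))⁻¹ * ((q ^ (F:ℤ)) ^ (τ₂:ℤ))⁻¹ := by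
          rw [zpow_neg, zpow_neg, zpow_mul]
      _ = (β * β' * σ'^(s:ℤ))⁻¹ * ((σ * σ'^(t:ℤ)) ^ (τ₂:ℤ))⁻¹ := by rw [hqfz, hqFz]
      _ = β⁻¹ * β'⁻¹ * (σ'^(s:ℤ))⁻¹ * ((σ ^ (τ₂:ℤ))⁻¹ * (σ' ^ ((t:ℤ)*(τ₂:ℤ)))⁻¹) := by
          rw [mul_inv, mul_inv, mul_zpow, ← zpow_mul, mul_inv]
      _ = β * β' * σ' ^ (-(s:ℤ)) * (σ ^ (τ₂:ℤ) * σ' ^ (-((t:ℤ)*τ₂))) := by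
          rw [hβinv, hβ'inv, ← zpow_neg, ← zpow_neg, ← zpow_neg, hσnegτ τ₂]
      _ = β * β' * σ' ^ (-(s:ℤ)) * (σ ^ (τ₂:ℤ) * σ' ^ (s:ℤ)) := by
          rw [zpow_congr' hσ'0 hσ'n hmod]
      _ = β' * β * σ ^ (τ₂:ℤ) * (σ' ^ (-(s:ℤ)) * σ' ^ (s:ℤ)) := by ring
      _ = β' * β * σ ^ (τ₂:ℤ) := by
          rw [← zpow_add₀ hσ'0, neg_add_cancel, zpow_zero, mul_one]
  have key5' : q ^ f' = β' * β * σ ^ τ₂ := by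
    have := key5; rw [zpow_natCast, zpow_natCast] at this; exact this
  have key6' : q ^ F' = σ' * σ ^ τ₁ := by
    have := key6; rw [zpow_natCast, zpow_natCast] at this; exact this
  exact ⟨hgcd, hdvd1, hdvd2, hdvd3, key5', key6',
    f', F', τ₂, τ₁, hf'b, hF'b, hτ₂, hτ₁, hgcd, hdvd1, hdvd2, hdvd3, key5', key6'⟩
end

section
/- Assume char K ≠ 2. Then the number of equivalence classes of the relation ~ on the set {(β,σ) ∈ K × K : β² = 1 and σ^{gcd(n,n−2)} = 1} equals 2 if m and n are both odd, equals 3 if m is odd and n is even, and equals 1 if m is even (regardless of the parity of n). -/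
section Aux

variable {K : Type*} [Field K]

lemma taft_gcd_odd {n : ℕ} (hn : 3 ≤ n) (h : Odd n) : Nat.gcd n (n - 2) = 1 := by
  have h2 := Nat.odd_iff.mp h
  obtain ⟨k, rfl⟩ : ∃ k, n = k + 2 := ⟨n - 2, by omega⟩
  rw [Nat.add_sub_cancel, Nat.add_comm, Nat.gcd_add_self_left]
  exact Nat.coprime_two_left.mpr (Nat.odd_iff.mpr (by omega))

lemma taft_gcd_even {n : ℕ} (hn : 3 ≤ n) (h : Even n) : Nat.gcd n (n - 2) = 2 := by
  have h2 := Nat.even_iff.mp h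
  obtain ⟨k, rfl⟩ : ∃ k, n = k + 2 := ⟨n - 2, by omega⟩
  rw [Nat.add_sub_cancel, Nat.add_comm, Nat.gcd_add_self_left]
  exact Nat.gcd_eq_left ⟨k / 2, by omega⟩

lemma taft_mem_odd {n : ℕ} (hn : 3 ≤ n) (h : Odd n) {p : K × K} :
    p ∈ taftSet K n ↔ (p.1 = 1 ∨ p.1 = -1) ∧ p.2 = 1 := by
  rw [taftSet, Set.mem_setOf_eq, taft_gcd_odd hn h, pow_one, sq, mul_self_eq_one_iff]

lemma taft_mem_even {n : ℕ} (hn : 3 ≤ n) (h : Even n) {p : K × K} :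
    p ∈ taftSet K n ↔ (p.1 = 1 ∨ p.1 = -1) ∧ (p.2 = 1 ∨ p.2 = -1) := by
  rw [taftSet, Set.mem_setOf_eq, taft_gcd_even hn h, sq, sq, mul_self_eq_one_iff,
    mul_self_eq_one_iff]

lemma taft_f_zero {m f : ℕ} (hmo : Odd m) (hf : f ≤ m - 1) (hd : m ∣ 2 * f) : f = 0 := by
  have hm : 1 ≤ m := hmo.pos
  have hcop : Nat.Coprime m 2 := Nat.coprime_two_right.mpr hmo
  have : m ∣ f := hcop.dvd_of_dvd_mul_left (by omega)
  exact Nat.eq_zero_of_dvd_of_lt this (by omega)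

/-- For odd `m`, the relation simplifies: `f = F = 0`. -/
lemma taftRel_odd_iff {m n : ℕ} (hmo : Odd m) {q : K} {p p' : K × K} :
    taftRel m n q p p' ↔ ∃ s t : ℕ, s ≤ n - 1 ∧ t ≤ n - 1 ∧ Nat.gcd t n = 1 ∧
      (1 : K) = p.1 * p'.1 * p'.2 ^ s ∧ (1 : K) = p.2 * p'.2 ^ t := by
  constructor
  · rintro ⟨f, F, s, t, hf, hF, hs, ht, hg, hdf, _, hdF, h1, h2⟩
    have hf0 : f = 0 := taft_f_zero hmo hf hdf
    have hF0 : F = 0 := taft_f_zero hmo hF hdF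
    subst hf0 hF0
    rw [pow_zero] at h1 h2
    exact ⟨s, t, hs, ht, hg, h1, h2⟩
  · rintro ⟨s, t, hs, ht, hg, h1, h2⟩
    exact ⟨0, 0, s, t, by omega, by omega, hs, ht, hg, ⟨0, by ring⟩, ⟨0, by ring⟩,
      ⟨0, by ring⟩, by rw [pow_zero]; exact h1, by rw [pow_zero]; exact h2⟩

lemma taft_q_half {m : ℕ} (hm : 2 ≤ m) (hme : Even m) {q : K} (hq : IsPrimitiveRoot q m) :
    q ^ (m / 2) = -1 := by
  have hm2 := Nat.even_iff.mp hme
  have h1 : q ^ (m / 2) * q ^ (m / 2) = 1 := by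
    rw [← pow_add]
    have : m / 2 + m / 2 = m := by omega
    rw [this, hq.pow_eq_one]
  rcases mul_self_eq_one_iff.mp h1 with h | h
  · exact absurd h (hq.pow_ne_one_of_pos_of_lt (by omega) (by omega))
  · exact h

lemma taft_t_odd {n t : ℕ} (he : Even n) (hg : Nat.gcd t n = 1) : Odd t := by
  rcases Nat.even_or_odd t with ht | ht
  · exfalso
    have h2 : 2 ∣ Nat.gcd t n := Nat.dvd_gcd ht.two_dvd he.two_dvd
    omega
  · exact ht

lemma taft_neg_one_ne_one (hchar : ringChar K ≠ 2) : (-1 : K) ≠ 1 :=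
  Ring.neg_one_ne_one_of_char_ne_two hchar

end Aux
section Classes

variable {K : Type*} [Field K]

/-- m odd, n odd: class of (β,1) is {(β,1)}. -/
lemma taft_class_oo {m n : ℕ} (hmo : Odd m) (hn : 3 ≤ n) (hno : Odd n)
    (hchar : ringChar K ≠ 2) {q : K} {β : K} (hβ : β = 1 ∨ β = -1) :
    {p' ∈ taftSet K n | taftRel m n q (β, 1) p'} = {(β, 1)} := by
  have hne := taft_neg_one_ne_one hchar
  ext ⟨b, c⟩
  simp only [Set.mem_setOf_eq, Set.mem_singleton_iff, Prod.mk.injEq,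
    taft_mem_odd hn hno, taftRel_odd_iff hmo]
  constructor
  · rintro ⟨⟨hb, rfl⟩, s, t, _, _, _, h1, h2⟩
    refine ⟨?_, rfl⟩
    rw [one_pow, mul_one] at h1
    rcases hβ with rfl | rfl <;> rcases hb with rfl | rfl <;>
      first
        | rfl
        | (rw [one_mul] at h1; exact absurd h1.symm hne)
        | (rw [mul_one] at h1; exact absurd h1.symm hne)
  · rintro ⟨rfl, rfl⟩
    refine ⟨⟨hβ, rfl⟩, 0, 1, by omega, by omega, Nat.gcd_one_left n, ?_, by norm_num⟩
    rcases hβ with rfl | rfl <;> norm_num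

/-- m odd, n even: class of (β,1) is {(β,1)}. -/
lemma taft_class_oe1 {m n : ℕ} (hmo : Odd m) (hn : 3 ≤ n) (hne' : Even n)
    (hchar : ringChar K ≠ 2) {q : K} {β : K} (hβ : β = 1 ∨ β = -1) :
    {p' ∈ taftSet K n | taftRel m n q (β, 1) p'} = {(β, 1)} := by
  have hne := taft_neg_one_ne_one hchar
  ext ⟨b, c⟩
  simp only [Set.mem_setOf_eq, Set.mem_singleton_iff, Prod.mk.injEq,
    taft_mem_even hn hne', taftRel_odd_iff hmo]
  constructor
  · rintro ⟨⟨hb, hc⟩, s, t, _, _, hg, h1, h2⟩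
    have ht : Odd t := taft_t_odd hne' hg
    have hc1 : c = 1 := by
      rcases hc with rfl | rfl
      · rfl
      · rw [ht.neg_one_pow, one_mul] at h2; exact absurd h2.symm hne
    subst hc1
    rw [one_pow, mul_one] at h1
    refine ⟨?_, rfl⟩
    rcases hβ with rfl | rfl <;> rcases hb with rfl | rfl <;>
      first
        | rfl
        | (rw [one_mul] at h1; exact absurd h1.symm hne)
        | (rw [mul_one] at h1; exact absurd h1.symm hne)
  · rintro ⟨rfl, rfl⟩
    refine ⟨⟨hβ, Or.inl rfl⟩, 0, 1, by omega, by omega, Nat.gcd_one_left n, ?_, by norm_num⟩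
    rcases hβ with rfl | rfl <;> norm_num

/-- m odd, n even: class of (β,-1) is {(1,-1),(-1,-1)}. -/
lemma taft_class_oe2 {m n : ℕ} (hmo : Odd m) (hn : 3 ≤ n) (hne' : Even n)
    (hchar : ringChar K ≠ 2) {q : K} {β : K} (hβ : β = 1 ∨ β = -1) :
    {p' ∈ taftSet K n | taftRel m n q (β, -1) p'} = {((1 : K), (-1 : K)), (-1, -1)} := by
  have hne := taft_neg_one_ne_one hchar
  ext ⟨b, c⟩
  simp only [Set.mem_setOf_eq, Set.mem_insert_iff, Set.mem_singleton_iff, Prod.mk.injEq,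
    taft_mem_even hn hne', taftRel_odd_iff hmo]
  constructor
  · rintro ⟨⟨hb, hc⟩, s, t, _, _, hg, h1, h2⟩
    have ht : Odd t := taft_t_odd hne' hg
    have hc1 : c = -1 := by
      rcases hc with rfl | rfl
      · rw [one_pow, mul_one] at h2; exact absurd h2.symm hne
      · rfl
    subst hc1
    rcases hb with rfl | rfl
    · exact Or.inl ⟨rfl, rfl⟩
    · exact Or.inr ⟨rfl, rfl⟩
  · rintro (⟨rfl, rfl⟩ | ⟨rfl, rfl⟩) <;>
      rcases hβ with rfl | rfl
    · exact ⟨⟨Or.inl rfl, Or.inr rfl⟩, 0, 1, by omega, by omega, Nat.gcd_one_left n,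
        by norm_num, by norm_num⟩
    · exact ⟨⟨Or.inl rfl, Or.inr rfl⟩, 1, 1, by omega, by omega, Nat.gcd_one_left n,
        by norm_num, by norm_num⟩
    · exact ⟨⟨Or.inr rfl, Or.inr rfl⟩, 1, 1, by omega, by omega, Nat.gcd_one_left n,
        by norm_num, by norm_num⟩
    · exact ⟨⟨Or.inr rfl, Or.inr rfl⟩, 0, 1, by omega, by omega, Nat.gcd_one_left n,
        by norm_num, by norm_num⟩

/-- m even: any two elements of the set are related. -/
lemma taft_rel_all {m n : ℕ} (hm : 2 ≤ m) (hme : Even m) (hn : 3 ≤ n)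
    {q : K} (hq : IsPrimitiveRoot q m) (hchar : ringChar K ≠ 2) {p p' : K × K}
    (hp : p ∈ taftSet K n) (hp' : p' ∈ taftSet K n) : taftRel m n q p p' := by
  have hq2 := taft_q_half hm hme hq
  have hne := taft_neg_one_ne_one hchar
  have hm2 := Nat.even_iff.mp hme
  obtain ⟨hp1, hp2⟩ := hp
  obtain ⟨hp1', hp2'⟩ := hp'
  have hb : p.1 = 1 ∨ p.1 = -1 := mul_self_eq_one_iff.mp (by rw [← pow_two]; exact hp1)
  have hb' : p'.1 = 1 ∨ p'.1 = -1 := mul_self_eq_one_iff.mp (by rw [← pow_two]; exact hp1')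
  have h1 : ∃ f, f ≤ m - 1 ∧ m ∣ 2 * f ∧ q ^ f = p.1 * p'.1 * p'.2 ^ 0 := by
    rcases hb with e1 | e1 <;> rcases hb' with e2 | e2 <;> rw [pow_zero, mul_one, e1, e2]
    · exact ⟨0, by omega, ⟨0, by omega⟩, by norm_num⟩
    · exact ⟨m / 2, by omega, ⟨1, by omega⟩, by rw [hq2]; norm_num⟩
    · exact ⟨m / 2, by omega, ⟨1, by omega⟩, by rw [hq2]; norm_num⟩
    · exact ⟨0, by omega, ⟨0, by omega⟩, by norm_num⟩
  have h2 : ∃ F, F ≤ m - 1 ∧ m ∣ n * F ∧ m ∣ 2 * F ∧ q ^ F = p.2 * p'.2 ^ 1 := by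
    rw [pow_one]
    have hgcd_cases : p.2 * p'.2 = 1 ∨ (p.2 * p'.2 = -1 ∧ Even n) := by
      rcases Nat.even_or_odd n with he | ho
      · rw [taft_gcd_even hn he] at hp2 hp2'
        have hc : p.2 = 1 ∨ p.2 = -1 := mul_self_eq_one_iff.mp (by rw [← pow_two]; exact hp2)
        have hc' : p'.2 = 1 ∨ p'.2 = -1 :=
          mul_self_eq_one_iff.mp (by rw [← pow_two]; exact hp2')
        rcases hc with h | h <;> rcases hc' with h' | h' <;> rw [h, h']
        · exact Or.inl (by norm_num)
        · exact Or.inr ⟨by norm_num, he⟩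
        · exact Or.inr ⟨by norm_num, he⟩
        · exact Or.inl (by norm_num)
      · rw [taft_gcd_odd hn ho, pow_one] at hp2 hp2'
        exact Or.inl (by rw [hp2, hp2', one_mul])
    rcases hgcd_cases with h | ⟨h, he⟩
    · exact ⟨0, by omega, ⟨0, by omega⟩, ⟨0, by omega⟩, by rw [pow_zero, h]⟩
    · obtain ⟨a, ha⟩ := he
      obtain ⟨b, hb2⟩ := hme
      refine ⟨m / 2, by omega, ⟨a, ?_⟩, ⟨1, by omega⟩, by rw [hq2, h]⟩
      have : m / 2 = b := by omega
      rw [this, ha, hb2]; ring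
  obtain ⟨f, hf1, hf2, hf3⟩ := h1
  obtain ⟨F, hF1, hF2, hF3, hF4⟩ := h2
  exact ⟨f, F, 0, 1, hf1, hF1, by omega, by omega, Nat.gcd_one_left n, hf2, hF2, hF3, hf3, hF4⟩

end Classes
/-- The number of equivalence classes of `~` on `taftSet K n` is `2` if `m` and `n` are both
odd, `3` if `m` is odd and `n` is even, and `1` if `m` is even. -/
theorem taftRel_ncard_classes {K : Type*} [Field K] (m n : ℕ) (hm : 2 ≤ m) (hn : 3 ≤ n)
    (q : K) (hq : IsPrimitiveRoot q m) (hchar : ringChar K ≠ 2) :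
    (Odd m → Odd n →
      ({C : Set (K × K) | ∃ p ∈ taftSet K n,
        C = {p' ∈ taftSet K n | taftRel m n q p p'}}).ncard = 2) ∧
    (Odd m → Even n →
      ({C : Set (K × K) | ∃ p ∈ taftSet K n,
        C = {p' ∈ taftSet K n | taftRel m n q p p'}}).ncard = 3) ∧
    (Even m →
      ({C : Set (K × K) | ∃ p ∈ taftSet K n,
        C = {p' ∈ taftSet K n | taftRel m n q p p'}}).ncard = 1) := by
  have hne := taft_neg_one_ne_one hchar
  refine ⟨fun hmo hno => ?_, fun hmo hne' => ?_, fun hme => ?_⟩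
  · -- m odd, n odd
    have hset : {C : Set (K × K) | ∃ p ∈ taftSet K n,
        C = {p' ∈ taftSet K n | taftRel m n q p p'}}
        = {{((1 : K), (1 : K))}, {((-1 : K), (1 : K))}} := by
      ext C
      simp only [Set.mem_setOf_eq, Set.mem_insert_iff, Set.mem_singleton_iff]
      constructor
      · rintro ⟨⟨β, σ⟩, hp, rfl⟩
        rw [taft_mem_odd hn hno] at hp
        obtain ⟨hβ, hσ⟩ := hp
        dsimp only at hβ hσ
        subst hσ
        rcases hβ with rfl | rfl
        · exact Or.inl (taft_class_oo hmo hn hno hchar (Or.inl rfl))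
        · exact Or.inr (taft_class_oo hmo hn hno hchar (Or.inr rfl))
      · rintro (rfl | rfl)
        · exact ⟨(1, 1), (taft_mem_odd hn hno).mpr ⟨Or.inl rfl, rfl⟩,
            (taft_class_oo hmo hn hno hchar (Or.inl rfl)).symm⟩
        · exact ⟨(-1, 1), (taft_mem_odd hn hno).mpr ⟨Or.inr rfl, rfl⟩,
            (taft_class_oo hmo hn hno hchar (Or.inr rfl)).symm⟩
    rw [hset]
    refine Set.ncard_pair fun h => ?_
    exact hne (congrArg Prod.fst (Set.singleton_eq_singleton_iff.mp h)).symm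
  · -- m odd, n even
    have hset : {C : Set (K × K) | ∃ p ∈ taftSet K n,
        C = {p' ∈ taftSet K n | taftRel m n q p p'}}
        = {{((1 : K), (1 : K))}, {((-1 : K), (1 : K))},
            {((1 : K), (-1 : K)), ((-1 : K), (-1 : K))}} := by
      ext C
      simp only [Set.mem_setOf_eq, Set.mem_insert_iff, Set.mem_singleton_iff]
      constructor
      · rintro ⟨⟨β, σ⟩, hp, rfl⟩
        rw [taft_mem_even hn hne'] at hp
        obtain ⟨hβ, hσ⟩ := hp
        dsimp only at hβ hσ
        rcases hσ with rfl | rfl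
        · rcases hβ with rfl | rfl
          · exact Or.inl (taft_class_oe1 hmo hn hne' hchar (Or.inl rfl))
          · exact Or.inr (Or.inl (taft_class_oe1 hmo hn hne' hchar (Or.inr rfl)))
        · exact Or.inr (Or.inr (taft_class_oe2 hmo hn hne' hchar hβ))
      · rintro (rfl | rfl | rfl)
        · exact ⟨(1, 1), (taft_mem_even hn hne').mpr ⟨Or.inl rfl, Or.inl rfl⟩,
            (taft_class_oe1 hmo hn hne' hchar (Or.inl rfl)).symm⟩
        · exact ⟨(-1, 1), (taft_mem_even hn hne').mpr ⟨Or.inr rfl, Or.inl rfl⟩,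
            (taft_class_oe1 hmo hn hne' hchar (Or.inr rfl)).symm⟩
        · exact ⟨(1, -1), (taft_mem_even hn hne').mpr ⟨Or.inl rfl, Or.inr rfl⟩,
            (taft_class_oe2 hmo hn hne' hchar (Or.inl rfl)).symm⟩
    rw [hset]
    refine Set.ncard_eq_three.mpr ⟨_, _, _, ?_, ?_, ?_, rfl⟩
    · exact fun h => hne (congrArg Prod.fst (Set.singleton_eq_singleton_iff.mp h)).symm
    · intro h
      have h1 : ((1 : K), (-1 : K)) ∈ ({((1 : K), (-1 : K)), ((-1 : K), (-1 : K))} :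
          Set (K × K)) := Set.mem_insert _ _
      rw [← h] at h1
      exact hne (congrArg Prod.snd (Set.mem_singleton_iff.mp h1))
    · intro h
      have h1 : ((1 : K), (-1 : K)) ∈ ({((1 : K), (-1 : K)), ((-1 : K), (-1 : K))} :
          Set (K × K)) := Set.mem_insert _ _
      rw [← h] at h1
      exact hne (congrArg Prod.snd (Set.mem_singleton_iff.mp h1))
  · -- m even
    have hone : ((1 : K), (1 : K)) ∈ taftSet K n := ⟨one_pow 2, one_pow _⟩
    have hset : {C : Set (K × K) | ∃ p ∈ taftSet K n,
        C = {p' ∈ taftSet K n | taftRel m n q p p'}} = {taftSet K n} := by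
      ext C
      simp only [Set.mem_setOf_eq, Set.mem_singleton_iff]
      constructor
      · rintro ⟨p, hp, rfl⟩
        exact Set.sep_eq_self_iff_mem_true.mpr
          fun p' hp' => taft_rel_all hm hme hn hq hchar hp hp'
      · rintro rfl
        exact ⟨(1, 1), hone, (Set.sep_eq_self_iff_mem_true.mpr
          fun p' hp' => taft_rel_all hm hme hn hq hchar hone hp').symm⟩
    rw [hset]
    exact Set.ncard_singleton _
end

section
/- Assume char K ≠ 2, m is odd and n is even. Then there do not exist integers f, F ∈ {0,…,m−1} and s, t ∈ {0,…,n−1} with gcd(t,n) = 1, m ∣ 2f, m ∣ nF, m ∣ 2F, q^f = (−1)^{s+1} and q^F = (−1)^t. In particular the pairs (1,1) and (−1,−1) are not related under ~. -/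
lemma taft_aux {K : Type*} [Field K] (m n : ℕ)
    (hm : 2 ≤ m) (hn : 3 ≤ n) (q : K) (hq : IsPrimitiveRoot q m)
    (hchar : ringChar K ≠ 2) (hmo : Odd m) (hne : Even n) :
    ¬ ∃ f F s t : ℕ, f ≤ m - 1 ∧ F ≤ m - 1 ∧ s ≤ n - 1 ∧ t ≤ n - 1 ∧
      Nat.gcd t n = 1 ∧ m ∣ 2 * f ∧ m ∣ n * F ∧ m ∣ 2 * F ∧
      q ^ f = (-1 : K) ^ (s + 1) ∧ q ^ F = (-1 : K) ^ t := by
  rintro ⟨f, F, s, t, hf, hF, hs, ht, hgcd, hmf, _, hmF, hqf, hqF⟩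
  have hm0 : 0 < m := by omega
  have hneg : (-1 : K) ≠ 1 := by
    intro h
    have h2 : (2 : K) = 0 := by linear_combination -h
    exact hchar (CharP.ringChar_of_prime_eq_zero Nat.prime_two h2)
  -- m odd and m ∣ 2k implies m ∣ k
  have hcop : Nat.Coprime m 2 := hmo.coprime_two_right
  have key : ∀ k : ℕ, m ∣ 2 * k → k ≤ m - 1 → k = 0 := by
    intro k hk hkle
    have h1 : m ∣ k := hcop.dvd_of_dvd_mul_left hk
    exact Nat.eq_zero_of_dvd_of_lt h1 (by omega)
  have hf0 : f = 0 := key f hmf hf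
  have hF0 : F = 0 := key F hmF hF
  subst hf0; subst hF0
  simp only [pow_zero] at hqf hqF
  -- q^0 = 1 = (-1)^(s+1) forces s+1 even, so s odd
  have hsodd : Odd s := by
    by_contra h
    rw [Nat.not_odd_iff_even] at h
    have : Odd (s + 1) := h.add_one
    rw [this.neg_one_pow] at hqf
    exact hneg hqf.symm
  have hteven : Even t := by
    by_contra h
    rw [Nat.not_even_iff_odd] at h
    rw [h.neg_one_pow] at hqF
    exact hneg hqF.symm
  -- but gcd(t,n)=1 with n even forces t odd
  have : ¬ Even t := by
    intro ht2
    have h2t : 2 ∣ t := ht2.two_dvd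
    have h2n : 2 ∣ n := hne.two_dvd
    have : (2 : ℕ) ∣ Nat.gcd t n := Nat.dvd_gcd h2t h2n
    omega
  exact this hteven

/-- If `char K ≠ 2`, `m` is odd and `n` is even, there is no admissible quadruple `(f, F, s, t)`
with `q^f = (-1)^{s+1}` and `q^F = (-1)^t`; in particular `(1,1)` and `(-1,-1)` are not
related under `~`. -/
theorem taftRel_not_one_one_negOne_negOne {K : Type*} [Field K] (m n : ℕ)
    (hm : 2 ≤ m) (hn : 3 ≤ n) (q : K) (hq : IsPrimitiveRoot q m)
    (hchar : ringChar K ≠ 2) (hmo : Odd m) (hne : Even n) :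
    (¬ ∃ f F s t : ℕ, f ≤ m - 1 ∧ F ≤ m - 1 ∧ s ≤ n - 1 ∧ t ≤ n - 1 ∧
      Nat.gcd t n = 1 ∧ m ∣ 2 * f ∧ m ∣ n * F ∧ m ∣ 2 * F ∧
      q ^ f = (-1 : K) ^ (s + 1) ∧ q ^ F = (-1 : K) ^ t) ∧
    ¬ taftRel m n q (1, 1) (-1, -1) := by
  have h := taft_aux m n hm hn q hq hchar hmo hne
  refine ⟨h, ?_⟩
  rintro ⟨f, F, s, t, hf, hF, hs, ht, hgcd, h1, h2, h3, hqf, hqF⟩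
  exact h ⟨f, F, s, t, hf, hF, hs, ht, hgcd, h1, h2, h3,
    by rw [hqf]; ring, by rw [hqF]; ring⟩
end

section
/- Assume m and n are both even. Then every pair (β,σ) ∈ K × K with β² = 1 and σ² = 1 satisfies (β,σ) ~ (1,1). In particular all four pairs (1,1), (−1,1), (1,−1), (−1,−1) lie in a single equivalence class of ~. -/
lemma taft_pow_half {K : Type*} [Field K] {m : ℕ} (hm : 2 ≤ m) {q : K}
    (hq : IsPrimitiveRoot q m) (hme : Even m) : q ^ (m / 2) = -1 := by
  have h2 : 2 * (m / 2) = m := Nat.two_mul_div_two_of_even hme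
  have hsq : (q ^ (m / 2)) ^ 2 = 1 := by
    rw [← pow_mul, mul_comm, h2, hq.pow_eq_one]
  rcases sq_eq_one_iff.mp hsq with h | h
  · exfalso
    have hd := (hq.pow_eq_one_iff_dvd _).mp h
    have := Nat.le_of_dvd (by omega) hd
    omega
  · exact h

/-- Given `x = 1` or `x = -1`, produce `f ≤ m-1` with `m ∣ 2f` and `q^f = x`. -/
lemma taft_choose {K : Type*} [Field K] {m : ℕ} (hm : 2 ≤ m) {q : K}
    (hq : IsPrimitiveRoot q m) (hme : Even m) (x : K) (hx : x ^ 2 = 1) :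
    ∃ f : ℕ, f ≤ m - 1 ∧ m ∣ 2 * f ∧ q ^ f = x := by
  rcases sq_eq_one_iff.mp hx with h | h
  · exact ⟨0, by omega, ⟨0, by ring⟩, by simp [h]⟩
  · have h2 : 2 * (m / 2) = m := Nat.two_mul_div_two_of_even hme
    refine ⟨m / 2, by omega, ⟨1, by omega⟩, ?_⟩
    rw [taft_pow_half hm hq hme, h]

/-- If `m` and `n` are both even then every pair `(β,σ)` with `β² = 1` and `σ² = 1` is related
to `(1,1)` under `~`; in particular all four pairs `(±1, ±1)` lie in a single class. -/
theorem taftRel_even_even {K : Type*} [Field K] (m n : ℕ) (hm : 2 ≤ m) (hn : 3 ≤ n)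
    (q : K) (hq : IsPrimitiveRoot q m) (hme : Even m) (hne : Even n) :
    (∀ β σ : K, β ^ 2 = 1 → σ ^ 2 = 1 → taftRel m n q (β, σ) (1, 1)) ∧
    taftRel m n q ((1 : K), (1 : K)) (1, 1) ∧
    taftRel m n q ((-1 : K), (1 : K)) (1, 1) ∧
    taftRel m n q ((1 : K), (-1 : K)) (1, 1) ∧
    taftRel m n q ((-1 : K), (-1 : K)) (1, 1) := by
  have main : ∀ β σ : K, β ^ 2 = 1 → σ ^ 2 = 1 → taftRel m n q (β, σ) (1, 1) := by
    intro β σ hβ hσ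
    obtain ⟨f, hf1, hf2, hf3⟩ := taft_choose hm hq hme β hβ
    obtain ⟨F, hF1, hF2, hF3⟩ := taft_choose hm hq hme σ hσ
    refine ⟨f, F, 0, 1, hf1, hF1, by omega, by omega, Nat.gcd_one_left n, hf2, ?_, hF2, ?_, ?_⟩
    · obtain ⟨k, hk⟩ := hne
      obtain ⟨j, hj⟩ := hF2
      refine ⟨k * j, ?_⟩
      calc n * F = k * (2 * F) := by rw [hk]; ring
        _ = m * (k * j) := by rw [hj]; ring
    · simpa using hf3
    · simpa using hF3
  exact ⟨main, main 1 1 (one_pow 2) (one_pow 2),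
    main (-1) 1 (by ring) (one_pow 2), main 1 (-1) (one_pow 2) (by ring),
    main (-1) (-1) (by ring) (by ring)⟩
end

section
/- Assume char K ≠ 2, m is odd and n is even. Then for all β, β', σ, σ' ∈ K with β² = β'² = 1 and σ² = σ'² = 1, one has (β,σ) ~ (β',σ') if and only if σ = σ' and (σ = −1 or β = β'). Consequently the equivalence classes of ~ are exactly {(1,1)}, {(−1,1)} and {(1,−1),(−1,−1)}. -/
lemma taft_pow_of_sq_one {K : Type*} [Field K] {x : K} (hx : x ^ 2 = 1) (k : ℕ) :
    x ^ k = 1 ∨ x ^ k = x := by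
  rcases Nat.even_or_odd k with ⟨j, hj⟩ | ⟨j, hj⟩
  · left; subst hj; rw [← two_mul, pow_mul, hx, one_pow]
  · right; subst hj; rw [pow_add, pow_mul, hx, one_pow, pow_one, one_mul]

lemma taft_sq_eq_one {K : Type*} [Field K] {x : K} (hx : x ^ 2 = 1) : x = 1 ∨ x = -1 := by
  have h : x * x = 1 := by rw [← sq]; exact hx
  exact mul_self_eq_one_iff.mp h

lemma taft_eq_of_mul_eq_one {K : Type*} [Field K] {x y : K} (h : x * y = 1) (hy : y ^ 2 = 1) :
    x = y := by
  calc x = x * (y * y) := by rw [← sq, hy, mul_one]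
    _ = (x * y) * y := by ring
    _ = y := by rw [h, one_mul]

lemma taft_main {K : Type*} [Field K] (m n : ℕ)
    (hm : 2 ≤ m) (hn : 3 ≤ n) (q : K)
    (hchar : ringChar K ≠ 2) (hmo : Odd m) (hne : Even n)
    (β β' σ σ' : K) (hβ : β ^ 2 = 1) (hβ' : β' ^ 2 = 1) (hσ : σ ^ 2 = 1) (hσ' : σ' ^ 2 = 1) :
    taftRel m n q (β, σ) (β', σ') ↔ (σ = σ' ∧ (σ = -1 ∨ β = β')) := by
  have hne1 : (-1 : K) ≠ 1 := Ring.neg_one_ne_one_of_char_ne_two hchar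
  have hcop : Nat.Coprime m 2 := hmo.coprime_two_right
  constructor
  · rintro ⟨f, F, s, t, hf, hF, hs, ht, hgt, hd1, hd2, hd3, he1, he2⟩
    have hf0 : f = 0 :=
      Nat.eq_zero_of_dvd_of_lt (Nat.Coprime.dvd_of_dvd_mul_left hcop hd1) (by omega)
    have hF0 : F = 0 :=
      Nat.eq_zero_of_dvd_of_lt (Nat.Coprime.dvd_of_dvd_mul_left hcop hd3) (by omega)
    subst hf0 hF0
    simp only [pow_zero] at he1 he2
    have hto : Odd t := by
      rw [Nat.odd_iff]
      by_contra h
      have h2t : 2 ∣ t := by omega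
      have h2n : 2 ∣ n := hne.two_dvd
      have : (2 : ℕ) ∣ Nat.gcd t n := Nat.dvd_gcd h2t h2n
      rw [hgt] at this; omega
    have hst : σ' ^ t = σ' := by
      obtain ⟨j, hj⟩ := hto
      rw [hj, pow_add, pow_mul, hσ', one_pow, pow_one, one_mul]
    rw [hst] at he2
    have hσσ' : σ = σ' := taft_eq_of_mul_eq_one he2.symm hσ'
    refine ⟨hσσ', ?_⟩
    rcases taft_pow_of_sq_one hσ' s with h | h
    · right
      rw [h, mul_one] at he1
      exact taft_eq_of_mul_eq_one he1.symm hβ'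
    · rcases taft_sq_eq_one hσ' with h1 | h1
      · right
        rw [h, h1, mul_one] at he1
        exact taft_eq_of_mul_eq_one he1.symm hβ'
      · left; rw [hσσ', h1]
  · rintro ⟨hσσ', h⟩
    by_cases hββ' : β = β'
    · refine ⟨0, 0, 0, 1, by omega, by omega, by omega, by omega,
        Nat.gcd_one_left n, by simp, by simp, by simp, ?_, ?_⟩
      · simp [hββ', ← sq, hβ']
      · simp [hσσ', ← sq, hσ']
    · have hσ1 : σ = -1 := h.resolve_right hββ'
      have hβ1 : β * β' = -1 := by
        rcases taft_sq_eq_one hβ with h1 | h1 <;> rcases taft_sq_eq_one hβ' with h2 | h2 <;>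
          simp_all
      refine ⟨0, 0, 1, 1, by omega, by omega, by omega, by omega,
        Nat.gcd_one_left n, by simp, by simp, by simp, ?_, ?_⟩
      · simp [hβ1, ← hσσ', hσ1]
      · simp [hσσ', ← sq, hσ']

/-- If `char K ≠ 2`, `m` is odd and `n` is even, then `(β,σ) ~ (β',σ')` iff `σ = σ'` and
(`σ = -1` or `β = β'`); consequently the equivalence classes of `~` are exactly
`{(1,1)}`, `{(-1,1)}` and `{(1,-1), (-1,-1)}`. -/
theorem taftRel_classification_odd_even {K : Type*} [Field K] (m n : ℕ)
    (hm : 2 ≤ m) (hn : 3 ≤ n) (q : K) (hq : IsPrimitiveRoot q m)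
    (hchar : ringChar K ≠ 2) (hmo : Odd m) (hne : Even n) :
    (∀ β β' σ σ' : K, β ^ 2 = 1 → β' ^ 2 = 1 → σ ^ 2 = 1 → σ' ^ 2 = 1 →
      (taftRel m n q (β, σ) (β', σ') ↔ (σ = σ' ∧ (σ = -1 ∨ β = β')))) ∧
    {p' ∈ taftSet K n | taftRel m n q (1, 1) p'} = {((1 : K), (1 : K))} ∧
    {p' ∈ taftSet K n | taftRel m n q (-1, 1) p'} = {((-1 : K), (1 : K))} ∧
    {p' ∈ taftSet K n | taftRel m n q (1, -1) p'} =
      {((1 : K), (-1 : K)), ((-1 : K), (-1 : K))} := by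
  have hne1 : (-1 : K) ≠ 1 := Ring.neg_one_ne_one_of_char_ne_two hchar
  have hgcd : Nat.gcd n (n - 2) = 2 := by
    obtain ⟨k, hk⟩ := hne
    have h1 : n = 2 * k := by omega
    have h2 : n - 2 = 2 * (k - 1) := by omega
    have hc : Nat.gcd k (k - 1) = 1 := by
      obtain ⟨j, rfl⟩ : ∃ j, k = j + 1 := ⟨k - 1, by omega⟩
      simp [Nat.succ_sub_one]
    rw [h2, h1, Nat.gcd_mul_left, hc, mul_one]
  have main := fun (β β' σ σ' : K) hβ hβ' hσ hσ' =>
    taft_main m n hm hn q hchar hmo hne β β' σ σ' hβ hβ' hσ hσ'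
  refine ⟨main, ?_, ?_, ?_⟩
  · ext ⟨β', σ'⟩
    simp only [Set.mem_sep_iff, taftSet, Set.mem_setOf_eq, hgcd, Set.mem_singleton_iff,
      Prod.mk.injEq]
    constructor
    · rintro ⟨⟨hβ', hσ'⟩, hrel⟩
      obtain ⟨h1, h2⟩ := (main 1 β' 1 σ' (one_pow 2) hβ' (one_pow 2) hσ').mp hrel
      rcases h2 with h2 | h2
      · exact absurd h2.symm hne1
      · exact ⟨h2.symm, h1.symm⟩
    · rintro ⟨rfl, rfl⟩
      exact ⟨⟨one_pow 2, one_pow 2⟩,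
        (main 1 1 1 1 (one_pow 2) (one_pow 2) (one_pow 2) (one_pow 2)).mpr ⟨rfl, Or.inr rfl⟩⟩
  · ext ⟨β', σ'⟩
    simp only [Set.mem_sep_iff, taftSet, Set.mem_setOf_eq, hgcd, Set.mem_singleton_iff,
      Prod.mk.injEq]
    constructor
    · rintro ⟨⟨hβ', hσ'⟩, hrel⟩
      obtain ⟨h1, h2⟩ := (main (-1) β' 1 σ' (neg_one_sq) hβ' (one_pow 2) hσ').mp hrel
      rcases h2 with h2 | h2
      · exact absurd h2.symm hne1
      · exact ⟨h2.symm, h1.symm⟩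
    · rintro ⟨rfl, rfl⟩
      exact ⟨⟨neg_one_sq, one_pow 2⟩,
        (main (-1) (-1) 1 1 neg_one_sq neg_one_sq (one_pow 2) (one_pow 2)).mpr
          ⟨rfl, Or.inr rfl⟩⟩
  · ext ⟨β', σ'⟩
    simp only [Set.mem_sep_iff, taftSet, Set.mem_setOf_eq, hgcd, Set.mem_insert_iff,
      Set.mem_singleton_iff, Prod.mk.injEq]
    constructor
    · rintro ⟨⟨hβ', hσ'⟩, hrel⟩
      obtain ⟨h1, _⟩ := (main 1 β' (-1) σ' (one_pow 2) hβ' neg_one_sq hσ').mp hrel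
      rcases taft_sq_eq_one hβ' with h2 | h2
      · exact Or.inl ⟨h2, h1.symm⟩
      · exact Or.inr ⟨h2, h1.symm⟩
    · rintro (⟨rfl, rfl⟩ | ⟨rfl, rfl⟩)
      · exact ⟨⟨one_pow 2, neg_one_sq⟩,
          (main 1 1 (-1) (-1) (one_pow 2) (one_pow 2) neg_one_sq neg_one_sq).mpr
            ⟨rfl, Or.inl rfl⟩⟩
      · exact ⟨⟨neg_one_sq, neg_one_sq⟩,
          (main 1 (-1) (-1) (-1) (one_pow 2) neg_one_sq neg_one_sq neg_one_sq).mpr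
            ⟨rfl, Or.inl rfl⟩⟩
end

section
/- Assume char K ≠ 2 and that both m and n are odd. Then every σ ∈ K with σ^{gcd(n,n−2)} = 1 equals 1, and for all β, β' ∈ K with β² = β'² = 1 one has (β,1) ~ (β',1) if and only if β = β'. Consequently ~ has exactly the two equivalence classes {(1,1)} and {(−1,1)}. -/
/-- If `char K ≠ 2` and `m`, `n` are both odd, then every `σ` with `σ^{gcd(n,n-2)} = 1`
equals `1`, and `(β,1) ~ (β',1)` iff `β = β'`; consequently `~` has exactly the two
equivalence classes `{(1,1)}` and `{(-1,1)}`. -/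
theorem taftRel_classification_odd_odd {K : Type*} [Field K] (m n : ℕ)
    (hm : 2 ≤ m) (hn : 3 ≤ n) (q : K) (hq : IsPrimitiveRoot q m)
    (hchar : ringChar K ≠ 2) (hmo : Odd m) (hno : Odd n) :
    (∀ σ : K, σ ^ Nat.gcd n (n - 2) = 1 → σ = 1) ∧
    (∀ β β' : K, β ^ 2 = 1 → β' ^ 2 = 1 →
      (taftRel m n q (β, 1) (β', 1) ↔ β = β')) ∧
    {C : Set (K × K) | ∃ p ∈ taftSet K n,
      C = {p' ∈ taftSet K n | taftRel m n q p p'}} =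
      {{((1 : K), (1 : K))}, {((-1 : K), (1 : K))}} := by
  have hn2 : n % 2 = 1 := Nat.odd_iff.mp hno
  have hm2 : m % 2 = 1 := Nat.odd_iff.mp hmo
  -- gcd(n, n-2) = 1
  have hg : Nat.gcd n (n - 2) = 1 := by
    have hd2 : Nat.gcd n (n - 2) ∣ 2 := by
      have h := Nat.dvd_sub (Nat.gcd_dvd_left n (n - 2)) (Nat.gcd_dvd_right n (n - 2))
      have he : n - (n - 2) = 2 := by omega
      rwa [he] at h
    have hdn : Nat.gcd n (n - 2) ∣ n := Nat.gcd_dvd_left _ _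
    rcases (Nat.dvd_prime Nat.prime_two).mp hd2 with h | h
    · exact h
    · exfalso; rw [h] at hdn; omega
  have part1 : ∀ σ : K, σ ^ Nat.gcd n (n - 2) = 1 → σ = 1 := by
    intro σ hσ
    rwa [hg, pow_one] at hσ
  have part2 : ∀ β β' : K, β ^ 2 = 1 → β' ^ 2 = 1 →
      (taftRel m n q (β, 1) (β', 1) ↔ β = β') := by
    intro β β' hb hb'
    constructor
    · rintro ⟨f, F, s, t, hf, hF, hs, ht, hgt, hm2f, _, _, hqf, _⟩
      have hcop : Nat.Coprime m 2 := by
        have hd : Nat.gcd m 2 ∣ 2 := Nat.gcd_dvd_right m 2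
        have hdm : Nat.gcd m 2 ∣ m := Nat.gcd_dvd_left m 2
        rcases (Nat.dvd_prime Nat.prime_two).mp hd with h | h
        · exact h
        · exfalso; rw [h] at hdm; omega
      have hmf : m ∣ f := hcop.dvd_of_dvd_mul_left hm2f
      have hf0 : f = 0 := Nat.eq_zero_of_dvd_of_lt hmf (by omega)
      subst hf0
      simp only [pow_zero, one_pow, mul_one] at hqf
      have hb'ne : β' ≠ 0 := by
        rintro rfl; simp at hb'
      have hqf' : (1 : K) = β * β' := hqf
      linear_combination β * hqf' + β' * hb
    · rintro rfl
      refine ⟨0, 0, 0, 1, Nat.zero_le _, Nat.zero_le _, Nat.zero_le _, by omega,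
        Nat.gcd_one_left n, ⟨0, by ring⟩, ⟨0, by ring⟩, ⟨0, by ring⟩, ?_, by simp⟩
      simp only [pow_zero, one_pow, mul_one]
      linear_combination -hb
  refine ⟨part1, part2, ?_⟩
  have hne : (-1 : K) ≠ 1 := Ring.neg_one_ne_one_of_char_ne_two hchar
  have hmem : ∀ β : K, β ^ 2 = 1 → (β, (1 : K)) ∈ taftSet K n := by
    intro β hb
    exact ⟨hb, one_pow _⟩
  have hclass : ∀ β : K, β ^ 2 = 1 →
      {p' ∈ taftSet K n | taftRel m n q (β, 1) p'} = {(β, (1 : K))} := by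
    intro β hb
    ext ⟨β', σ'⟩
    simp only [Set.mem_setOf_eq, Set.mem_singleton_iff, taftSet, Prod.mk.injEq]
    constructor
    · rintro ⟨⟨hb', hσ'⟩, hrel⟩
      have hσ1 : σ' = 1 := part1 σ' hσ'
      subst hσ1
      exact ⟨((part2 β β' hb hb').mp hrel).symm, rfl⟩
    · rintro ⟨rfl, rfl⟩
      exact ⟨⟨hb, one_pow _⟩, (part2 _ _ hb hb).mpr rfl⟩
  ext C
  simp only [Set.mem_setOf_eq, Set.mem_insert_iff, Set.mem_singleton_iff]
  constructor
  · rintro ⟨⟨β, σ⟩, ⟨hb, hσ⟩, rfl⟩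
    have hσ1 : σ = 1 := part1 σ hσ
    subst hσ1
    have hb2 : β ^ 2 = 1 := hb
    have : β = 1 ∨ β = -1 :=
      mul_self_eq_one_iff.mp (by linear_combination hb2)
    rcases this with rfl | rfl
    · left; exact hclass 1 (one_pow 2)
    · right; exact hclass (-1) (by ring)
  · rintro (rfl | rfl)
    · exact ⟨(1, 1), hmem 1 (one_pow 2), (hclass 1 (one_pow 2)).symm⟩
    · exact ⟨(-1, 1), hmem (-1) (by ring), (hclass (-1) (by ring)).symm⟩
end

section
/- Assume m is even. Then any two pairs (β,σ), (β',σ') of elements of K with β² = β'² = 1 and σ^{gcd(n,n−2)} = σ'^{gcd(n,n−2)} = 1 satisfy (β,σ) ~ (β',σ'). Consequently ~ has exactly one equivalence class whenever m is even, regardless of the parity of n. -/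
lemma taft_key {K : Type*} [Field K] (m n : ℕ)
    (hm : 2 ≤ m) (hn : 3 ≤ n) (q : K) (hq : IsPrimitiveRoot q m) (hme : Even m) :
    ∀ p ∈ taftSet K n, ∀ p' ∈ taftSet K n, taftRel m n q p p' := by
  rintro ⟨b, s⟩ ⟨hb, hs⟩ ⟨b', s'⟩ ⟨hb', hs'⟩
  dsimp only at hb hs hb' hs'
  have h2m : 2 ∣ m := hme.two_dvd
  have hmd : m / 2 * 2 = m := Nat.div_mul_cancel h2m
  have hm2lt : m / 2 < m := Nat.div_lt_self (by omega) one_lt_two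
  have hm2le : m / 2 ≤ m - 1 := by omega
  have hqhalf : q ^ (m / 2) = -1 := by
    have h1 : q ^ (m / 2) * q ^ (m / 2) = 1 := by
      rw [← pow_add]
      have : m / 2 + m / 2 = m := by omega
      rw [this, hq.pow_eq_one]
    rcases mul_self_eq_one_iff.mp h1 with h | h
    · exact absurd h (hq.pow_ne_one_of_pos_of_lt (by omega) hm2lt)
    · exact h
  -- gcd divides 2
  have hgd : Nat.gcd n (n - 2) ∣ 2 := by
    have := Nat.dvd_sub (Nat.gcd_dvd_left n (n - 2)) (Nat.gcd_dvd_right n (n - 2))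
    simpa [Nat.sub_sub_self (by omega : 2 ≤ n)] using this
  have hsq : ∀ x : K, x ^ Nat.gcd n (n - 2) = 1 → x ^ 2 = 1 := by
    intro x hx
    obtain ⟨c, hc⟩ := hgd
    rw [hc, pow_mul, hx, one_pow]
  have hs2 : s ^ 2 = 1 := hsq s hs
  have hs'2 : s' ^ 2 = 1 := hsq s' hs'
  -- choose f
  have hbb : b * b' = 1 ∨ b * b' = -1 := by
    apply mul_self_eq_one_iff.mp
    have : (b * b') * (b * b') = b ^ 2 * b' ^ 2 := by ring
    rw [this, hb, hb', one_mul]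
  have hss : s * s' = 1 ∨ s * s' = -1 := by
    apply mul_self_eq_one_iff.mp
    have : (s * s') * (s * s') = s ^ 2 * s' ^ 2 := by ring
    rw [this, hs2, hs'2, one_mul]
  obtain ⟨f, hf1, hf2, hf3⟩ : ∃ f, f ≤ m - 1 ∧ m ∣ 2 * f ∧ q ^ f = b * b' := by
    rcases hbb with h | h
    · exact ⟨0, by omega, ⟨0, by ring⟩, by simp [h]⟩
    · exact ⟨m / 2, hm2le, ⟨1, by omega⟩, by rw [hqhalf, h]⟩
  obtain ⟨F, hF1, hF2, hF3, hF4⟩ :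
      ∃ F, F ≤ m - 1 ∧ m ∣ n * F ∧ m ∣ 2 * F ∧ q ^ F = s * s' := by
    by_cases h : s * s' = 1
    · exact ⟨0, by omega, ⟨0, by ring⟩, ⟨0, by ring⟩, by simp [h]⟩
    · have hneg : s * s' = -1 := hss.resolve_left h
      -- n must be even (else gcd = 1 and s = s' = 1)
      have hne : 2 ∣ n := by
        by_contra hodd
        have hg1 : Nat.gcd n (n - 2) = 1 := by
          rcases (Nat.dvd_prime Nat.prime_two).mp hgd with h1 | h1
          · exact h1
          · exact absurd (h1 ▸ Nat.gcd_dvd_left n (n - 2)) hodd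
        rw [hg1, pow_one] at hs hs'
        rw [hs, hs', one_mul] at h
        exact h rfl
      obtain ⟨k, hk⟩ := hne
      have hnd : n * (m / 2) = m * k := by
        rw [hk]
        calc 2 * k * (m / 2) = k * (m / 2 * 2) := by ring
        _ = k * m := by rw [hmd]
        _ = m * k := by ring
      exact ⟨m / 2, hm2le, ⟨k, hnd⟩, ⟨1, by omega⟩, by rw [hqhalf, hneg]⟩
  exact ⟨f, F, 0, 1, hf1, hF1, by omega, by omega, Nat.gcd_one_left n,
    hf2, hF2, hF3, by rw [hf3, pow_zero, mul_one], by rw [hF4, pow_one]⟩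

/-- If `m` is even then any two pairs in `taftSet K n` are related under `~`; consequently
`~` has exactly one equivalence class, regardless of the parity of `n`. -/
theorem taftRel_even_m_single_class {K : Type*} [Field K] (m n : ℕ)
    (hm : 2 ≤ m) (hn : 3 ≤ n) (q : K) (hq : IsPrimitiveRoot q m) (hme : Even m) :
    (∀ p ∈ taftSet K n, ∀ p' ∈ taftSet K n, taftRel m n q p p') ∧
    {C : Set (K × K) | ∃ p ∈ taftSet K n,
      C = {p' ∈ taftSet K n | taftRel m n q p p'}} = {taftSet K n} := by
  have key := taft_key m n hm hn q hq hme
  refine ⟨key, ?_⟩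
  have hone : ((1 : K), (1 : K)) ∈ taftSet K n := ⟨one_pow 2, one_pow _⟩
  ext C
  simp only [Set.mem_setOf_eq, Set.mem_singleton_iff]
  constructor
  · rintro ⟨p, hp, rfl⟩
    ext p'
    simp only [Set.mem_setOf_eq, Set.mem_sep_iff]
    exact ⟨fun h => h.1, fun h => ⟨h, key p hp p' h⟩⟩
  · rintro rfl
    refine ⟨(1, 1), hone, ?_⟩
    ext p'
    simp only [Set.mem_setOf_eq, Set.mem_sep_iff]
    exact ⟨fun h => ⟨h, key _ hone p' h⟩, fun h => h.1⟩
end
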